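/- In the free lattice F₄ on generators x₁, x₂, x₃, x₄, there do not exist elements z₁, z₂, z₃ with z₁ ∨ z₂ ∨ z₃ = x₁ ∨ x₂ ∨ x₃ ∨ x₄ and z₁ ∧ z₂ ∧ z₃ = x₁ ∧ x₂ ∧ x₃ ∧ x₄ such that z₁ = x₁ (say) and x₂, x₃, x₄ all lie in the interval K = [z₁z₂ ∨ z₁z₃ ∨ z₂z₃, (z₁∨z₂)(z₁∨z₃)(z₂∨z₃)]. -/
import Mathlib


/-- A family `g : ι → F` freely generates the lattice `F`. -/
def IsFreeLattice {F : Type*} [Lattice F] {ι : Type*} (g : ι → F) : Prop :=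
  ∀ {L : Type*} [Lattice L] (f : ι → L), ∃! h : LatticeHom F L, ∀ i, h (g i) = f i

/-- In the free lattice `F₄` on generators `x₁, x₂, x₃, x₄`, there are no elements
`z₁, z₂, z₃` with `z₁ ∨ z₂ ∨ z₃ = x₁ ∨ x₂ ∨ x₃ ∨ x₄` and
`z₁ ∧ z₂ ∧ z₃ = x₁ ∧ x₂ ∧ x₃ ∧ x₄` such that `z₁ = x₁` and `x₂, x₃, x₄` all lie in
the interval `K = [z₁z₂ ∨ z₁z₃ ∨ z₂z₃, (z₁∨z₂)(z₁∨z₃)(z₂∨z₃)]`. -/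
theorem no_free_generators_in_K_interval {F : Type*} [Lattice F] (g : Fin 4 → F)
    (hfree : IsFreeLattice g)
    (x₁ x₂ x₃ x₄ : F) (h1 : x₁ = g 0) (h2 : x₂ = g 1) (h3 : x₃ = g 2) (h4 : x₄ = g 3) :
    ¬ ∃ z₁ z₂ z₃ : F,
        z₁ ⊔ z₂ ⊔ z₃ = x₁ ⊔ x₂ ⊔ x₃ ⊔ x₄ ∧
        z₁ ⊓ z₂ ⊓ z₃ = x₁ ⊓ x₂ ⊓ x₃ ⊓ x₄ ∧
        z₁ = x₁ ∧
        (∀ w ∈ ({x₂, x₃, x₄} : Set F),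
          z₁ ⊓ z₂ ⊔ z₁ ⊓ z₃ ⊔ z₂ ⊓ z₃ ≤ w ∧
          w ≤ (z₁ ⊔ z₂) ⊓ (z₁ ⊔ z₃) ⊓ (z₂ ⊔ z₃)) := by
  rintro ⟨z₁, z₂, z₃, -, -, -, hK⟩
  obtain ⟨h, hh, -⟩ := hfree (fun i => ULift.up i : Fin 4 → ULift (Fin 4))
  have hx2 := hK x₂ (by simp)
  have hx3 := hK x₃ (by simp)
  have e2 : h x₂ = ULift.up 1 := by rw [h2]; exact hh 1
  have e3 : h x₃ = ULift.up 2 := by rw [h3]; exact hh 2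
  have hmono : Monotone h := OrderHomClass.monotone h
  have m2 : h (z₁ ⊓ z₂ ⊔ z₁ ⊓ z₃ ⊔ z₂ ⊓ z₃) ≤ ULift.up 1 := e2 ▸ hmono hx2.1
  have M3 : ULift.up (2 : Fin 4) ≤ h ((z₁ ⊔ z₂) ⊓ (z₁ ⊔ z₃) ⊓ (z₂ ⊔ z₃)) := e3 ▸ hmono hx3.2
  simp only [map_sup, map_inf] at m2 M3
  revert m2 M3
  generalize h z₁ = a
  generalize h z₂ = b
  generalize h z₃ = c
  revert a b c
  decide
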